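/- Let M ≢ 0 (mod 3) and let L be a positive divisor of M with radical L* > 2 and ℓ distinct prime factors. Then J₀(L,M) = (1/6)·(M·φ(L*)/L* − (M/3)·2^ℓ·ε), where (M/3) is the Legendre symbol of M mod 3, and ε = 1 if L* has no prime factor congruent to 1 mod 3, ε = 0 otherwise. -/

import Mathlib

open Finset

/-- `Ik k L M = Σ t^k` over integers `0 < t < M/2` with `gcd(t, L) = 1`. -/
def Ik (k L M : ℕ) : ℕ :=
  ∑ t ∈ (Finset.range M).filter (fun t => 0 < t ∧ 2 * t < M ∧ Nat.gcd t L = 1), t ^ k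

/-- `Jk k L M = Σ u^k` over integers `0 < u < M/2` with `gcd(u, L) = 1` and `u ≡ -M (mod 3)`. -/
def Jk (k L M : ℕ) : ℕ :=
  ∑ t ∈ (Finset.range M).filter
    (fun t => 0 < t ∧ 2 * t < M ∧ Nat.gcd t L = 1 ∧ (t + M) % 3 = 0), t ^ k

/-- The radical of `n`: the product of the distinct prime divisors of `n`. -/
def rad (n : ℕ) : ℕ := ∏ p ∈ n.primeFactors, p

/-- The Legendre symbol modulo 3. -/
def legendre3 (n : ℕ) : ℤ :=
  if n % 3 = 0 then 0 else if n % 3 = 1 then 1 else -1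

lemma Jk_zero_card (L M : ℕ) :
    Jk 0 L M = ((Finset.range M).filter
      (fun t => 0 < t ∧ 2 * t < M ∧ Nat.gcd t L = 1 ∧ (t + M) % 3 = 0)).card := by
  simp [Jk]

lemma base_case (M : ℕ) (hM3 : ¬ (3 ∣ M)) :
    (6 * Jk 0 1 M : ℤ) = M - legendre3 M - 3 * (if M % 2 = 0 then 1 else 0) := by
  have hM3' : M % 3 ≠ 0 := fun h => hM3 (Nat.dvd_of_mod_eq_zero h)
  have hset : (Finset.range M).filter
      (fun t => 0 < t ∧ 2 * t < M ∧ Nat.gcd t 1 = 1 ∧ (t + M) % 3 = 0)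
      = (Finset.range (((M - 1) / 2 + 3 - (3 - M % 3)) / 3)).image
          (fun i => (3 - M % 3) + 3 * i) := by
    ext t
    simp only [Finset.mem_filter, Finset.mem_range, Finset.mem_image, Nat.gcd_one_right,
      true_and, and_true]
    constructor
    · rintro ⟨h1, h2, h3, h4⟩
      exact ⟨(t - (3 - M % 3)) / 3, by omega, by omega⟩
    · rintro ⟨i, hi, rfl⟩
      exact ⟨by omega, by omega, by omega, by omega⟩
  have hcard : Jk 0 1 M = ((M - 1) / 2 + 3 - (3 - M % 3)) / 3 := by
    rw [Jk_zero_card, hset, Finset.card_image_of_injective _ (fun a b h => by omega),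
      Finset.card_range]
  rw [hcard]
  unfold legendre3
  split_ifs <;> omega

lemma Jk_split (p R Q : ℕ) (hp : p.Prime) (hp3 : ¬ (3 ∣ p)) (hpR : Nat.Coprime p R) :
    Jk 0 R (p * Q) = Jk 0 (p * R) (p * Q) + Jk 0 R Q := by
  classical
  have hp0 : 0 < p := hp.pos
  rw [Jk_zero_card, Jk_zero_card, Jk_zero_card]
  set S := (Finset.range (p * Q)).filter
    (fun t => 0 < t ∧ 2 * t < p * Q ∧ Nat.gcd t R = 1 ∧ (t + p * Q) % 3 = 0) with hS
  have hsplit : (S.filter (fun t => p ∣ t)).card + (S.filter (fun t => ¬ p ∣ t)).card = S.card :=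
    Finset.card_filter_add_card_filter_not (s := S) (p := fun t => p ∣ t)
  have h1 : S.filter (fun t => ¬ p ∣ t) = (Finset.range (p * Q)).filter
      (fun t => 0 < t ∧ 2 * t < p * Q ∧ Nat.gcd t (p * R) = 1 ∧ (t + p * Q) % 3 = 0) := by
    rw [hS, Finset.filter_filter]
    apply Finset.filter_congr
    intro t _
    have hmul : Nat.Coprime t (p * R) ↔ (Nat.Coprime t p ∧ Nat.Coprime t R) :=
      Nat.coprime_mul_iff_right
    have htp : Nat.Coprime t p ↔ ¬ p ∣ t := by
      rw [Nat.coprime_comm]; exact hp.coprime_iff_not_dvd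
    unfold Nat.Coprime at hmul htp
    constructor
    · rintro ⟨⟨a, b, c, d⟩, e⟩
      exact ⟨a, b, hmul.mpr ⟨htp.mpr e, c⟩, d⟩
    · rintro ⟨a, b, c, d⟩
      obtain ⟨c1, c2⟩ := hmul.mp c
      exact ⟨⟨a, b, c2, d⟩, htp.mp c1⟩
  have h2 : (S.filter (fun t => p ∣ t)).card = ((Finset.range Q).filter
      (fun t => 0 < t ∧ 2 * t < Q ∧ Nat.gcd t R = 1 ∧ (t + Q) % 3 = 0)).card := by
    apply Finset.card_nbij' (fun t => t / p) (fun s => p * s)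
    · intro t ht
      simp only [hS, Finset.mem_coe, Finset.mem_filter, Finset.mem_range] at ht
      obtain ⟨⟨htr, h01, h02, h03, h04⟩, hdvd⟩ := ht
      obtain ⟨u, rfl⟩ := hdvd
      beta_reduce
      rw [Nat.mul_div_cancel_left _ hp0]
      simp only [Finset.mem_coe, Finset.mem_filter, Finset.mem_range]
      have hu : 0 < u := by
        rcases Nat.eq_zero_or_pos u with rfl | h
        · simp at h01
        · exact h
      have h2u : 2 * u < Q := by
        have h' : p * (2 * u) < p * Q := by rw [show p * (2 * u) = 2 * (p * u) by ring]; exact h02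
        exact lt_of_mul_lt_mul_left h' (Nat.zero_le p)
      have hg : Nat.gcd u R = 1 := (Nat.coprime_mul_iff_left.mp (h03 : Nat.Coprime (p * u) R)).2
      have hmod : (u + Q) % 3 = 0 := by
        have h3 : (3:ℕ) ∣ p * (u + Q) := by
          rw [show p * (u + Q) = p * u + p * Q by ring]
          exact Nat.dvd_of_mod_eq_zero h04
        rcases (Nat.Prime.dvd_mul (by norm_num)).mp h3 with h | h
        · exact absurd h hp3
        · omega
      exact ⟨by omega, hu, h2u, hg, hmod⟩
    · intro s hs
      simp only [Finset.mem_coe, Finset.mem_filter, Finset.mem_range] at hs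
      obtain ⟨hsr, h01, h02, h03, h04⟩ := hs
      simp only [hS, Finset.mem_coe, Finset.mem_filter, Finset.mem_range]
      have hg : Nat.gcd (p * s) R = 1 := Nat.coprime_mul_iff_left.mpr ⟨hpR, h03⟩
      have hlt : 2 * (p * s) < p * Q := by
        rw [show 2 * (p * s) = p * (2 * s) by ring]
        exact Nat.mul_lt_mul_of_le_of_lt (le_refl p) h02 hp0
      have hmod : (p * s + p * Q) % 3 = 0 := by
        have hd : (3:ℕ) ∣ s + Q := by omega
        have : (3:ℕ) ∣ p * s + p * Q := by
          rw [show p * s + p * Q = p * (s + Q) by ring]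
          exact Dvd.dvd.mul_left hd p
        omega
      exact ⟨⟨by omega, Nat.mul_pos hp0 h01, hlt, hg, hmod⟩, Dvd.intro _ rfl⟩
    · intro t ht
      simp only [Finset.mem_coe, Finset.mem_filter] at ht
      exact Nat.mul_div_cancel' ht.2
    · intro s _
      exact Nat.mul_div_cancel_left _ hp0
  rw [← hsplit, h1, h2]
  omega

lemma leg3_mul (a b : ℕ) : legendre3 (a * b) = legendre3 a * legendre3 b := by
  have h : (a * b) % 3 = (a % 3) * (b % 3) % 3 := Nat.mul_mod a b 3
  unfold legendre3
  rcases (show a % 3 = 0 ∨ a % 3 = 1 ∨ a % 3 = 2 by omega) with h1 | h1 | h1 <;>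
  rcases (show b % 3 = 0 ∨ b % 3 = 1 ∨ b % 3 = 2 by omega) with h2 | h2 | h2 <;>
  rw [h1, h2] at h <;> norm_num at h <;> split_ifs <;> omega

/-- ε as a function of a finset of primes. -/
def eps' (s : Finset ℕ) : ℤ := if ∀ p ∈ s, p % 3 ≠ 1 then 1 else 0

/-- correction term δ. -/
def dlt' (s : Finset ℕ) (M : ℕ) : ℤ :=
  if s = ∅ then (if M % 2 = 0 then 1 else 0)
  else if s = {2} then (if M % 4 = 2 then 1 else 0) else 0

lemma dlt_step (p : ℕ) (s : Finset ℕ) (hp : p.Prime) (hps : p ∉ s) (M Q : ℕ)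
    (hM : M = p * Q) : dlt' (insert p s) M = dlt' s M - dlt' s Q := by
  classical
  have hne : insert p s ≠ (∅ : Finset ℕ) := Finset.insert_ne_empty _ _
  rcases eq_or_ne s ∅ with rfl | hsne
  · rcases eq_or_ne p 2 with rfl | hp2
    · have h12 : insert 2 (∅ : Finset ℕ) = {2} := rfl
      rw [h12]
      unfold dlt'
      norm_num
      split_ifs <;> omega
    · have hodd : p % 2 = 1 := hp.eq_two_or_odd.resolve_left hp2
      have hsing : insert p (∅ : Finset ℕ) = {p} := rfl
      have hne2 : ({p} : Finset ℕ) ≠ {2} := by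
        simp only [ne_eq, Finset.singleton_inj]; exact hp2
      have e0 : ({p} : Finset ℕ) ≠ ∅ := by simp
      rw [hsing]
      unfold dlt'
      simp only [if_neg e0, if_neg hne2, if_pos rfl]
      have hiff : 2 ∣ M ↔ 2 ∣ Q := by
        subst hM
        rw [Nat.Prime.dvd_mul Nat.prime_two]
        constructor
        · rintro (h | h)
          · omega
          · exact h
        · exact Or.inr
      split_ifs <;> omega
  · rcases eq_or_ne s {2} with rfl | hs2
    · have hp2 : p ≠ 2 := by simpa using hps
      have hodd : p % 2 = 1 := hp.eq_two_or_odd.resolve_left hp2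
      have hne2 : insert p ({2} : Finset ℕ) ≠ {2} := by
        intro h
        have : p ∈ ({2} : Finset ℕ) := h ▸ Finset.mem_insert_self p {2}
        simp at this
        exact hp2 this
      have e1 : ({2} : Finset ℕ) ≠ ∅ := by simp
      unfold dlt'
      simp only [if_neg hne, if_neg hne2, if_neg e1, if_pos rfl]
      have hiff2 : 2 ∣ M ↔ 2 ∣ Q := by
        subst hM
        rw [Nat.Prime.dvd_mul Nat.prime_two]
        constructor
        · rintro (h | h); · omega
          · exact h
        · exact Or.inr
      have hiff4 : 4 ∣ M ↔ 4 ∣ Q := by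
        subst hM
        constructor
        · intro h
          have hcop : Nat.Coprime 4 p := by
            have h2p : Nat.Coprime 2 p := (Nat.prime_two.coprime_iff_not_dvd).mpr (by omega)
            exact (Nat.Coprime.pow_left 2 h2p : Nat.Coprime (2^2) p)
          exact hcop.dvd_of_dvd_mul_left h
        · intro h; exact Dvd.dvd.mul_left h p
      split_ifs <;> omega
    · have hins2 : insert p s ≠ {2} := by
        intro h
        have hsub : s ⊆ {2} := h ▸ Finset.subset_insert p s
        rcases Finset.subset_singleton_iff.mp hsub with h' | h'
        · exact hsne h'
        · exact hs2 h'
      unfold dlt'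
      simp only [if_neg hne, if_neg hins2, if_neg hsne, if_neg hs2]
      ring

lemma key (s : Finset ℕ) : (∀ p ∈ s, p.Prime) → ∀ M : ℕ, (∏ p ∈ s, p) ∣ M → ¬ (3 ∣ M) →
    (6 * Jk 0 (∏ p ∈ s, p) M : ℤ)
      = ((M / ∏ p ∈ s, p : ℕ) : ℤ) * ((∏ p ∈ s, p).totient : ℤ)
        - legendre3 M * 2 ^ s.card * eps' s - 3 * dlt' s M := by
  classical
  induction s using Finset.induction_on with
  | empty =>
    intro _ M _ h3
    simpa [eps', dlt', Nat.totient_one] using base_case M h3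
  | @insert p s hps ih =>
    intro hpr M hdvd h3
    have hp : p.Prime := hpr p (Finset.mem_insert_self p s)
    have hs' : ∀ q ∈ s, q.Prime := fun q hq => hpr q (Finset.mem_insert_of_mem hq)
    have hp0 : 0 < p := hp.pos
    set R := ∏ q ∈ s, q with hR
    have hprod : ∏ q ∈ insert p s, q = p * R := Finset.prod_insert hps
    rw [hprod] at hdvd ⊢
    have hR0 : 0 < R := Finset.prod_pos (fun q hq => (hs' q hq).pos)
    have hpR : Nat.Coprime p R := Nat.Coprime.prod_right fun q hq =>
      (Nat.coprime_primes hp (hs' q hq)).mpr (by rintro rfl; exact hps hq)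
    have hpM : p ∣ M := dvd_trans (Dvd.intro R rfl) hdvd
    set Q := M / p with hQdef
    have hMQ : M = p * Q := (Nat.mul_div_cancel' hpM).symm
    have hRQ : R ∣ Q := by
      have : p * R ∣ p * Q := hMQ ▸ hdvd
      exact (Nat.mul_dvd_mul_iff_left hp0).mp this
    have hRM : R ∣ M := dvd_trans (Dvd.intro_left p rfl) hdvd
    have h3Q : ¬ (3 ∣ Q) := fun h => h3 (hMQ ▸ Dvd.dvd.mul_left h p)
    have h3p : ¬ (3 ∣ p) := fun h => h3 (dvd_trans h hpM)
    have hsplit := Jk_split p R Q hp h3p hpR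
    rw [← hMQ] at hsplit
    have ihM := ih hs' M hRM h3
    have ihQ := ih hs' Q hRQ h3Q
    have hJ : (6 * Jk 0 (p * R) M : ℤ) = 6 * Jk 0 R M - 6 * Jk 0 R Q := by
      have hc : (Jk 0 R M : ℤ) = (Jk 0 (p * R) M : ℤ) + (Jk 0 R Q : ℤ) := by
        exact_mod_cast hsplit
      linarith
    rw [hJ, ihM, ihQ]
    -- main term
    obtain ⟨q0, hq0⟩ : p * R ∣ M := hdvd
    have hMR : M / R = p * q0 := by
      rw [hq0, show p * R * q0 = R * (p * q0) by ring]
      exact Nat.mul_div_cancel_left _ hR0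
    have hQR : Q / R = q0 := by
      have : Q = R * q0 := by
        have : p * Q = p * (R * q0) := by rw [← hMQ, hq0]; ring
        exact Nat.eq_of_mul_eq_mul_left hp0 this
      rw [this]; exact Nat.mul_div_cancel_left _ hR0
    have hMpR : M / (p * R) = q0 := by rw [hq0]; exact Nat.mul_div_cancel_left _ (by positivity)
    have htot : (p * R).totient = (p - 1) * R.totient := by
      rw [Nat.totient_mul hpR, Nat.totient_prime hp]
    have hcard : (insert p s).card = s.card + 1 := Finset.card_insert_of_notMem hps
    have hlegM : legendre3 M = legendre3 p * legendre3 Q := by rw [hMQ, leg3_mul]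
    have hdlt := dlt_step p s hp hps M Q hMQ
    rw [hdlt, hMpR, hMR, hQR, htot, hcard]
    -- now handle legendre/eps
    by_cases hp1 : p % 3 = 1
    · have hleg : legendre3 p = 1 := by unfold legendre3; rw [if_neg (by omega), if_pos hp1]
      have heps0 : eps' (insert p s) = 0 := by
        unfold eps'
        rw [if_neg]
        push_neg
        exact ⟨p, Finset.mem_insert_self p s, hp1⟩
      have hlegQ : legendre3 Q = legendre3 M := by rw [hlegM, hleg, one_mul]
      rw [heps0, hlegQ]
      push_cast [Nat.cast_sub hp.one_le]
      ring
    · have hp2 : p % 3 = 2 := by omega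
      have hleg : legendre3 p = -1 := by
        unfold legendre3; rw [if_neg (by omega), if_neg (by omega)]
      have hlegQ : legendre3 Q = -legendre3 M := by rw [hlegM, hleg]; ring
      have heps : eps' (insert p s) = eps' s := by
        unfold eps'
        have : (∀ q ∈ insert p s, q % 3 ≠ 1) ↔ (∀ q ∈ s, q % 3 ≠ 1) := by
          constructor
          · intro h q hq; exact h q (Finset.mem_insert_of_mem hq)
          · intro h q hq
            rcases Finset.mem_insert.mp hq with rfl | hq'
            · omega
            · exact h q hq'
        rw [if_congr this rfl rfl]
      rw [heps, hlegQ]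
      push_cast [Nat.cast_sub hp.one_le]
      ring

lemma coprime_rad (L t : ℕ) (hL : L ≠ 0) : Nat.gcd t L = 1 ↔ Nat.gcd t (rad L) = 1 := by
  constructor
  · intro h
    exact Nat.Coprime.coprime_dvd_right (Nat.prod_primeFactors_dvd L) h
  · intro h
    by_contra hc
    obtain ⟨q, hq, hqt, hqL⟩ := Nat.Prime.not_coprime_iff_dvd.mp hc
    have hmem : q ∣ rad L :=
      Finset.dvd_prod_of_mem _ (Nat.mem_primeFactors.mpr ⟨hq, hqL, hL⟩)
    exact (Nat.Prime.not_coprime_iff_dvd.mpr ⟨q, hq, hqt, hmem⟩) h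

lemma Jk_rad (L M : ℕ) (hL : L ≠ 0) : Jk 0 L M = Jk 0 (rad L) M := by
  rw [Jk_zero_card, Jk_zero_card]
  congr 1
  apply Finset.filter_congr
  intro t _
  rw [coprime_rad L t hL]

theorem stmt_8 (L M : ℕ) (hL : 0 < L) (hLM : L ∣ M) (hM3 : ¬ (3 ∣ M))
    (hrad : 2 < rad L) :
    (Jk 0 L M : ℚ) =
      (1 / 6) * ((M : ℚ) * (Nat.totient (rad L) : ℚ) / (rad L : ℚ) -
        (legendre3 M : ℚ) * 2 ^ (L.primeFactors.card) *
          (if ∀ p ∈ L.primeFactors, p % 3 ≠ 1 then (1 : ℚ) else 0)) := by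
  have hL0 : L ≠ 0 := hL.ne'
  have hprimes : ∀ p ∈ L.primeFactors, p.Prime := fun p hp => Nat.prime_of_mem_primeFactors hp
  have hraddvd : rad L ∣ M := dvd_trans (Nat.prod_primeFactors_dvd L) hLM
  have hkey := key L.primeFactors hprimes M hraddvd hM3
  rw [show (∏ p ∈ L.primeFactors, p) = rad L from rfl] at hkey
  rw [← Jk_rad L M hL0] at hkey
  have hdlt0 : dlt' L.primeFactors M = 0 := by
    unfold dlt'
    rw [if_neg, if_neg]
    · intro h
      have : rad L = 2 := by unfold rad; rw [h]; simp
      omega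
    · intro h
      have : rad L = 1 := by unfold rad; rw [h]; simp
      omega
  rw [hdlt0, mul_zero, sub_zero] at hkey
  have hR0 : (rad L : ℚ) ≠ 0 := by positivity
  have hMR : ((M / rad L : ℕ) : ℚ) = (M : ℚ) / (rad L : ℚ) := by
    rw [Nat.cast_div hraddvd hR0]
  have hkeyQ : (6 : ℚ) * (Jk 0 L M : ℚ)
      = ((M / rad L : ℕ) : ℚ) * ((rad L).totient : ℚ)
        - (legendre3 M : ℚ) * 2 ^ (L.primeFactors.card) * ((eps' L.primeFactors : ℤ) : ℚ) := by
    have h := congrArg (fun z : ℤ => (z : ℚ)) hkey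
    simp only [Int.cast_sub, Int.cast_mul, Int.cast_natCast, Int.cast_pow, Int.cast_ofNat] at h
    exact_mod_cast h
  have heps : ((eps' L.primeFactors : ℤ) : ℚ)
      = (if ∀ p ∈ L.primeFactors, p % 3 ≠ 1 then (1 : ℚ) else 0) := by
    unfold eps'; split_ifs <;> simp
  rw [heps, hMR] at hkeyQ
  rw [show (M : ℚ) * ((rad L).totient : ℚ) / (rad L : ℚ)
      = (M : ℚ) / (rad L : ℚ) * ((rad L).totient : ℚ) by ring]
  linarith
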